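/- For every integer n ≥ 3, the (3,1) broadcast domination number of the 3×n grid graph satisfies γ_{3,1}(G_{3,n}) = ⌈n/3⌉. -/

import Mathlib

open Classical in
/-- The reception strength at vertex `u` from a set `S` of broadcasting vertices of
transmission strength `t`: the sum of `t - d(u,v)` over all `v ∈ S` with `d(u,v) < t`. -/
noncomputable def reception {V : Type*} (G : SimpleGraph V) (t : ℕ) (S : Finset V) (u : V) : ℕ∞ :=
  ∑ v ∈ S.filter (fun v => G.edist u v < (t : ℕ∞)), ((t : ℕ∞) - G.edist u v)

/-- `S` is a `(t,r)` broadcast dominating set of `G`. -/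
def IsBroadcastDominating {V : Type*} (G : SimpleGraph V) (t r : ℕ) (S : Finset V) : Prop :=
  ∀ u, (r : ℕ∞) ≤ reception G t S u

/-- The `(t,r)` broadcast domination number of a finite graph `G`. -/
noncomputable def broadcastDomNum {V : Type*} [Fintype V] (G : SimpleGraph V) (t r : ℕ) : ℕ :=
  sInf {k | ∃ S : Finset V, IsBroadcastDominating G t r S ∧ S.card = k}

/-- The `m × n` grid graph: vertices are pairs, adjacent iff at ℓ1-distance 1. -/
def gridGraph (m n : ℕ) : SimpleGraph (Fin m × Fin n) where
  Adj p q := Nat.dist p.1.val q.1.val + Nat.dist p.2.val q.2.val = 1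
  symm := by
    constructor
    intro p q h
    show Nat.dist q.1.val p.1.val + Nat.dist q.2.val p.2.val = 1
    rw [Nat.dist_comm q.1.val p.1.val, Nat.dist_comm q.2.val p.2.val]
    exact h
  loopless := by
    constructor
    intro p h
    simp only [Nat.dist_self, Nat.add_zero] at h
    exact absurd h (by norm_num)

-- l1 lower bound on walk length
lemma l1_le_walk_length {m n : ℕ} {p q : Fin m × Fin n} (w : (gridGraph m n).Walk p q) :
    Nat.dist p.1.val q.1.val + Nat.dist p.2.val q.2.val ≤ w.length := by
  induction w with
  | nil => simp [Nat.dist_self]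
  | @cons a b c h w ih =>
    have h' : Nat.dist a.1.val b.1.val + Nat.dist a.2.val b.2.val = 1 := h
    rw [SimpleGraph.Walk.length_cons]
    simp only [Nat.dist] at *
    omega

lemma l1_le_edist {m n : ℕ} (p q : Fin m × Fin n) :
    ((Nat.dist p.1.val q.1.val + Nat.dist p.2.val q.2.val : ℕ) : ℕ∞)
      ≤ (gridGraph m n).edist p q := by
  by_cases h : (gridGraph m n).edist p q = ⊤
  · simp [h]
  · obtain ⟨w, hw⟩ := SimpleGraph.exists_walk_of_edist_ne_top h
    rw [← hw]
    exact_mod_cast l1_le_walk_length w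

lemma edist_le_one {m n : ℕ} {p q : Fin m × Fin n}
    (h : Nat.dist p.1.val q.1.val + Nat.dist p.2.val q.2.val ≤ 1) :
    (gridGraph m n).edist p q ≤ 1 := by
  rcases Nat.lt_or_ge (Nat.dist p.1.val q.1.val + Nat.dist p.2.val q.2.val) 1 with h0 | h1
  · have : p = q := by
      have h1 : Nat.dist p.1.val q.1.val = 0 ∧ Nat.dist p.2.val q.2.val = 0 := by omega
      have e1 : p.1 = q.1 := Fin.ext (Nat.eq_of_dist_eq_zero h1.1)
      have e2 : p.2 = q.2 := Fin.ext (Nat.eq_of_dist_eq_zero h1.2)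
      exact Prod.ext e1 e2
    simp [this]
  · have hadj : (gridGraph m n).Adj p q := le_antisymm h h1
    have := SimpleGraph.edist_le (SimpleGraph.Walk.cons hadj SimpleGraph.Walk.nil)
    simpa using this

lemma edist_le_two {n : ℕ} (u s : Fin 3 × Fin n) (hs : s.1.val = 1)
    (hc : Nat.dist u.2.val s.2.val ≤ 1) :
    (gridGraph 3 n).edist u s ≤ 2 := by
  set mid : Fin 3 × Fin n := (s.1, u.2) with hmid
  have h1 : (gridGraph 3 n).edist u mid ≤ 1 := by
    apply edist_le_one
    have : u.1.val < 3 := u.1.isLt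
    simp only [hmid, Nat.dist, hs, Nat.dist_self]
    omega
  have h2 : (gridGraph 3 n).edist mid s ≤ 1 := by
    apply edist_le_one
    simp only [hmid, Nat.dist, Nat.dist_self] at *
    omega
  calc (gridGraph 3 n).edist u s ≤ _ + _ := SimpleGraph.edist_triangle (v := mid)
    _ ≤ 1 + 1 := add_le_add h1 h2
    _ = 2 := by norm_num

open Classical in
lemma one_le_reception {n : ℕ} {S : Finset (Fin 3 × Fin n)} {u s : Fin 3 × Fin n}
    (hsS : s ∈ S) (h2 : (gridGraph 3 n).edist u s ≤ 2) :
    (1 : ℕ∞) ≤ reception (gridGraph 3 n) 3 S u := by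
  classical
  have hne : (gridGraph 3 n).edist u s ≠ ⊤ := by
    intro h; rw [h] at h2; exact absurd h2 (by norm_num)
  lift (gridGraph 3 n).edist u s to ℕ using hne with d hd
  have hd2 : d ≤ 2 := by exact_mod_cast h2
  have hlt : ((d:ℕ∞)) < ((3:ℕ) : ℕ∞) := by exact_mod_cast (by omega : d < 3)
  have hmem : s ∈ S.filter (fun v => (gridGraph 3 n).edist u v < ((3:ℕ) : ℕ∞)) :=
    Finset.mem_filter.mpr ⟨hsS, by rw [← hd]; exact hlt⟩
  have hterm : (1 : ℕ∞) ≤ ((3:ℕ) : ℕ∞) - (gridGraph 3 n).edist u s := by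
    rw [← hd]
    have h3 : ((3:ℕ):ℕ∞) - (d:ℕ∞) = ((3 - d : ℕ) : ℕ∞) := (ENat.coe_sub 3 d).symm
    rw [h3]
    exact_mod_cast (by omega : 1 ≤ 3 - d)
  calc (1:ℕ∞) ≤ ((3:ℕ) : ℕ∞) - (gridGraph 3 n).edist u s := hterm
    _ ≤ reception (gridGraph 3 n) 3 S u := by
        rw [reception]
        exact Finset.single_le_sum
          (f := fun v => ((3:ℕ) : ℕ∞) - (gridGraph 3 n).edist u v)
          (fun v _ => zero_le) hmem

open Classical in
lemma exists_close {n : ℕ} {S : Finset (Fin 3 × Fin n)}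
    (hS : IsBroadcastDominating (gridGraph 3 n) 3 1 S) (u : Fin 3 × Fin n) :
    ∃ s ∈ S, Nat.dist u.1.val s.1.val + Nat.dist u.2.val s.2.val ≤ 2 := by
  classical
  have h := hS u
  have hne : (S.filter (fun v => (gridGraph 3 n).edist u v < ((3:ℕ) : ℕ∞))).Nonempty := by
    by_contra hc
    rw [Finset.not_nonempty_iff_eq_empty] at hc
    rw [reception, hc] at h
    simp at h
  obtain ⟨s, hs⟩ := hne
  rw [Finset.mem_filter] at hs
  refine ⟨s, hs.1, ?_⟩
  have hlt : (gridGraph 3 n).edist u s < ((3:ℕ):ℕ∞) := hs.2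
  have hnet : (gridGraph 3 n).edist u s ≠ ⊤ := by
    intro ht; rw [ht] at hlt; exact absurd hlt (by simp)
  have hl1 := l1_le_edist u s
  lift (gridGraph 3 n).edist u s to ℕ using hnet with d hd
  have hd3 : d < 3 := by exact_mod_cast hlt
  have : Nat.dist u.1.val s.1.val + Nat.dist u.2.val s.2.val ≤ d := by exact_mod_cast hl1
  omega

theorem stmt3 (n : ℕ) (hn : 3 ≤ n) :
    (broadcastDomNum (gridGraph 3 n) 3 1 : ℤ) = ⌈(n : ℚ) / 3⌉ := by
  classical
  set k := (n + 2) / 3 with hk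
  have hS0 : ∃ S : Finset (Fin 3 × Fin n),
      IsBroadcastDominating (gridGraph 3 n) 3 1 S ∧ S.card = k := by
    refine ⟨(Finset.range k).image (fun i =>
      ((⟨1, by norm_num⟩ : Fin 3), (⟨min (3*i+1) (n-1), by omega⟩ : Fin n))), ?_, ?_⟩
    · intro u
      have hiu : u.2.val < n := u.2.isLt
      set i := u.2.val / 3 with hi
      have hik : i < k := by omega
      set s : Fin 3 × Fin n := (⟨1, by norm_num⟩, ⟨min (3*i+1) (n-1), by omega⟩) with hs
      have hsS : s ∈ (Finset.range k).image (fun i =>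
          ((⟨1, by norm_num⟩ : Fin 3), (⟨min (3*i+1) (n-1), by omega⟩ : Fin n))) :=
        Finset.mem_image.mpr ⟨i, Finset.mem_range.mpr hik, rfl⟩
      have hdist : Nat.dist u.2.val s.2.val ≤ 1 := by
        simp only [hs, Nat.dist]
        omega
      have := one_le_reception hsS (edist_le_two u s rfl hdist)
      exact_mod_cast this
    · rw [Finset.card_image_of_injOn, Finset.card_range]
      intro i hi j hj hij
      simp only [Finset.coe_range, Set.mem_Iio] at hi hj
      have hval : min (3*i+1) (n-1) = min (3*j+1) (n-1) :=
        congrArg (fun p : Fin 3 × Fin n => p.2.val) hij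
      omega
  have hlow : ∀ m ∈ {k | ∃ S : Finset (Fin 3 × Fin n),
      IsBroadcastDominating (gridGraph 3 n) 3 1 S ∧ S.card = k}, k ≤ m := by
    rintro m ⟨S, hS, rfl⟩
    choose f hfS hfd using exists_close hS
    set B : Finset (Fin 3 × Fin n) :=
      ({(0 : Fin 3), (2 : Fin 3)} : Finset (Fin 3)) ×ˢ Finset.univ with hB
    have hBcard : B.card = 2 * n := by
      rw [hB, Finset.card_product, Finset.card_univ]
      have : ({(0 : Fin 3), (2 : Fin 3)} : Finset (Fin 3)).card = 2 := by decide
      rw [this, Fintype.card_fin]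
    have hmap : ∀ u ∈ B, f u ∈ S := fun u _ => hfS u
    have hsum := Finset.card_eq_sum_card_fiberwise hmap
    have hmemfacts : ∀ s, ∀ u ∈ B.filter (fun u => f u = s),
        (u.1.val = 0 ∨ u.1.val = 2) ∧
          Nat.dist u.1.val s.1.val + Nat.dist u.2.val s.2.val ≤ 2 := by
      intro s u hu
      rw [Finset.mem_filter] at hu
      obtain ⟨huB, hfu⟩ := hu
      have hd := hfd u
      rw [hfu] at hd
      refine ⟨?_, hd⟩
      rw [hB, Finset.mem_product, Finset.mem_insert, Finset.mem_singleton] at huB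
      rcases huB.1 with h | h
      · left; rw [h]; rfl
      · right; rw [h]; rfl
    have hfib : ∀ s ∈ S, (B.filter (fun u => f u = s)).card ≤ 6 := by
      intro s hsmem
      have hrow : s.1.val = 0 ∨ s.1.val = 1 ∨ s.1.val = 2 := by omega
      have hcard6 : (Finset.range 6).card = 6 := Finset.card_range 6
      rcases hrow with hs0 | hs1 | hs2
      · rw [← hcard6]
        apply Finset.card_le_card_of_injOn
          (fun u => if u.1.val = 0 then u.2.val + 2 - s.2.val else 5)
        · intro u hu
          obtain ⟨hr, hd⟩ := hmemfacts s u hu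
          simp only [Nat.dist] at hd
          simp only [Finset.mem_coe, Finset.mem_range]
          split_ifs with h <;> omega
        · intro u hu v hv huv
          obtain ⟨hru, hdu⟩ := hmemfacts s u hu
          obtain ⟨hrv, hdv⟩ := hmemfacts s v hv
          simp only [Nat.dist] at hdu hdv
          simp only at huv
          split_ifs at huv with h1 h2 h2 <;>
            exact Prod.ext (Fin.ext (by omega)) (Fin.ext (by omega))
      · rw [← hcard6]
        apply Finset.card_le_card_of_injOn
          (fun u => 3 * (u.1.val / 2) + (u.2.val + 1 - s.2.val))
        · intro u hu
          obtain ⟨hr, hd⟩ := hmemfacts s u hu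
          simp only [Nat.dist] at hd
          simp only [Finset.mem_coe, Finset.mem_range]
          omega
        · intro u hu v hv huv
          obtain ⟨hru, hdu⟩ := hmemfacts s u hu
          obtain ⟨hrv, hdv⟩ := hmemfacts s v hv
          simp only [Nat.dist] at hdu hdv
          simp only at huv
          exact Prod.ext (Fin.ext (by omega)) (Fin.ext (by omega))
      · rw [← hcard6]
        apply Finset.card_le_card_of_injOn
          (fun u => if u.1.val = 2 then u.2.val + 2 - s.2.val else 5)
        · intro u hu
          obtain ⟨hr, hd⟩ := hmemfacts s u hu
          simp only [Nat.dist] at hd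
          simp only [Finset.mem_coe, Finset.mem_range]
          split_ifs with h <;> omega
        · intro u hu v hv huv
          obtain ⟨hru, hdu⟩ := hmemfacts s u hu
          obtain ⟨hrv, hdv⟩ := hmemfacts s v hv
          simp only [Nat.dist] at hdu hdv
          simp only at huv
          split_ifs at huv with h1 h2 h2 <;>
            exact Prod.ext (Fin.ext (by omega)) (Fin.ext (by omega))
    have hle : B.card ≤ 6 * S.card := by
      rw [hsum]
      calc ∑ s ∈ S, (B.filter (fun u => f u = s)).card
          ≤ ∑ _s ∈ S, 6 := Finset.sum_le_sum hfib
        _ = 6 * S.card := by rw [Finset.sum_const, smul_eq_mul, mul_comm]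
    omega
  have hnum : broadcastDomNum (gridGraph 3 n) 3 1 = k :=
    le_antisymm (Nat.sInf_le hS0) (le_csInf ⟨k, hS0⟩ hlow)
  rw [hnum]
  have h1 : 3 * k ≤ n + 2 := by omega
  have h2 : n ≤ 3 * k := by omega
  have hq1 : ((3 * k : ℕ) : ℚ) ≤ ((n + 2 : ℕ) : ℚ) := by exact_mod_cast h1
  have hq2 : ((n : ℕ) : ℚ) ≤ ((3 * k : ℕ) : ℚ) := by exact_mod_cast h2
  push_cast at hq1 hq2
  rw [eq_comm, Int.ceil_eq_iff]
  push_cast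
  constructor
  · linarith
  · linarith
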